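/- Let T be an α-tree on a measure space (X,μ) with 0 < μ(X) < ∞ and α ∈ (0,1/2], and let B be an α-concave function on Ω_ε. If φ is a T-simple function with ‖φ‖_{BMO(T)} ≤ ε, then B(⟨φ⟩_{X,μ}, ⟨φ²⟩_{X,μ}) ≥ (1/μ(X)) ∫_X B(φ,φ²) dμ. -/

import Mathlib

open MeasureTheory


/-- The parabolic strip Ω_ε = {(x₁,x₂) : x₁² ≤ x₂ ≤ x₁² + ε²}. -/
def OmegaSet (ε : ℝ) : Set (ℝ × ℝ) := {x | x.1 ^ 2 ≤ x.2 ∧ x.2 ≤ x.1 ^ 2 + ε ^ 2}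

/-- An α-tree on a measure space `(X, μ)`: the whole space `X` (as `Set.univ`) is the
root; each element is the union of finitely many pairwise a.e.-disjoint measurable
children, each of measure at least `α` times the measure of the parent; and the tree
differentiates `L¹(X, μ)`. -/
structure AlphaTree {X : Type*} [MeasurableSpace X] (μ : Measure X) (α : ℝ) where
  gens : ℕ → Set (Set X)
  children : Set X → Set (Set X)
  gens_zero : gens 0 = {Set.univ}
  gens_succ : ∀ m, gens (m + 1) = ⋃ J ∈ gens m, children J
  measurableSet_mem : ∀ m, ∀ J ∈ gens m, MeasurableSet J
  children_finite : ∀ m, ∀ J ∈ gens m, (children J).Finite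
  children_cover : ∀ m, ∀ J ∈ gens m, ⋃₀ children J = J
  children_ae_disjoint : ∀ m, ∀ J ∈ gens m, ∀ I ∈ children J, ∀ I' ∈ children J,
    I ≠ I' → μ (I ∩ I') = 0
  children_not_small : ∀ m, ∀ J ∈ gens m, ∀ I ∈ children J,
    α * (μ J).toReal ≤ (μ I).toReal
  differentiates : ∀ f : X → ℝ, Integrable f μ →
    ∀ J : ℕ → Set X, (∀ m, J m ∈ gens m) →
      ∀ᵐ x ∂μ, (∀ m, x ∈ J m) →
        Filter.Tendsto (fun m => ⨍ y in J m, f y ∂μ) Filter.atTop (nhds (f x))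

/-- All elements of an α-tree. -/
def AlphaTree.tree {X : Type*} [MeasurableSpace X] {μ : Measure X} {α : ℝ}
    (T : AlphaTree μ α) : Set (Set X) := ⋃ m, T.gens m



lemma discrete_step {ε t b X1 X2 uj wj : ℝ}
    (ht : 0 ≤ t) (hb : 0 ≤ b) (htb : t + b = 1)
    (hXup : X2 - X1 ^ 2 ≤ ε ^ 2)
    (hmax : X2 - X1 ^ 2 ≤ (wj - uj ^ 2) + (uj - X1) ^ 2) :
    t * (X2 - b * wj) - (X1 - b * uj) ^ 2 ≤ t ^ 2 * ε ^ 2 := by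
  have hb' : b = 1 - t := by linarith
  subst hb'
  nlinarith [sq_nonneg ((1 - t) * (uj - X1)),
    mul_nonneg (mul_nonneg ht hb)
      (by linarith : (0:ℝ) ≤ (wj - uj ^ 2) + (uj - X1) ^ 2 - (X2 - X1 ^ 2)),
    mul_le_mul_of_nonneg_left hXup (sq_nonneg t)]

lemma discrete_concave {ι : Type*} {a ε : ℝ} (hα : 0 < a) (hα2 : a ≤ 1 / 2) (hε : 0 < ε)
    (B : ℝ × ℝ → ℝ)
    (hB : ∀ β ∈ Set.Icc a (1 / 2 : ℝ), ∀ x y : ℝ × ℝ, x ∈ OmegaSet ε → y ∈ OmegaSet ε →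
      β • x + (1 - β) • y ∈ OmegaSet ε → β * B x + (1 - β) * B y ≤ B (β • x + (1 - β) • y)) :
    ∀ (s : Finset ι) (x : ι → ℝ × ℝ) (β : ι → ℝ),
      (∀ k ∈ s, a ≤ β k) → (∑ k ∈ s, β k) = 1 → (∀ k ∈ s, x k ∈ OmegaSet ε) →
      (∑ k ∈ s, β k • x k) ∈ OmegaSet ε →
      ∑ k ∈ s, β k * B (x k) ≤ B (∑ k ∈ s, β k • x k) := by
  classical
  intro s
  induction s using Finset.strongInduction with
  | _ s ih =>
    intro x β hβα hβ1 hxΩ hXΩ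
    have hsne : s.Nonempty := Finset.nonempty_of_sum_ne_zero (by rw [hβ1]; norm_num)
    set X : ℝ × ℝ := ∑ k ∈ s, β k • x k with hX
    have hβ0 : ∀ k ∈ s, 0 ≤ β k := fun k hk => le_trans hα.le (hβα k hk)
    have hX1 : X.1 = ∑ k ∈ s, β k * (x k).1 := by
      rw [hX, Prod.fst_sum]
      exact Finset.sum_congr rfl fun k _ => rfl
    have hX2 : X.2 = ∑ k ∈ s, β k * (x k).2 := by
      rw [hX, Prod.snd_sum]
      exact Finset.sum_congr rfl fun k _ => rfl
    obtain ⟨j, hjs, hjmax⟩ := s.exists_max_image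
      (fun k => ((x k).2 - (x k).1 ^ 2) + ((x k).1 - X.1) ^ 2) hsne
    by_cases hrest : s.erase j = ∅
    · -- single element
      have hsj : s = {j} := by
        apply Finset.eq_singleton_iff_unique_mem.2
        refine ⟨hjs, fun y hy => ?_⟩
        by_contra hne
        exact (Finset.ne_empty_of_mem (Finset.mem_erase.2 ⟨hne, hy⟩)) hrest
      subst hsj
      simp only [Finset.sum_singleton] at hβ1 ⊢
      rw [hX]
      simp [Finset.sum_singleton, hβ1]
    · have hrne : (s.erase j).Nonempty := Finset.nonempty_of_ne_empty hrest
      set b := β j with hbdef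
      set t := ∑ k ∈ s.erase j, β k with htdef
      have htb : t + b = 1 := by rw [htdef, hbdef, Finset.sum_erase_add s β hjs]; exact hβ1
      have hbα : a ≤ b := hβα j hjs
      obtain ⟨k0, hk0⟩ := hrne
      have htα : a ≤ t := by
        calc a ≤ β k0 := hβα k0 (Finset.mem_of_mem_erase hk0)
        _ ≤ t := Finset.single_le_sum (fun i hi => hβ0 i (Finset.mem_of_mem_erase hi)) hk0
      have ht0 : 0 < t := lt_of_lt_of_le hα htα
      have hb0 : 0 < b := lt_of_lt_of_le hα hbα
      have ht1 : t ≤ 1 := by linarith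
      set Y : ℝ × ℝ := t⁻¹ • ∑ k ∈ s.erase j, β k • x k with hYdef
      have htY : t • Y = ∑ k ∈ s.erase j, β k • x k := by
        rw [hYdef, smul_smul, mul_inv_cancel₀ ht0.ne', one_smul]
      have hXsplit : X = b • x j + t • Y := by
        rw [htY, hX, ← Finset.sum_erase_add s _ hjs, add_comm]
      set A1 := ∑ k ∈ s.erase j, β k * (x k).1 with hA1
      set A2 := ∑ k ∈ s.erase j, β k * (x k).2 with hA2
      have hY1 : Y.1 = t⁻¹ * A1 := by
        rw [hYdef, Prod.smul_fst, Prod.fst_sum, smul_eq_mul, hA1]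
        exact congrArg (fun z => t⁻¹ * z) (Finset.sum_congr rfl fun k _ => rfl)
      have hY2 : Y.2 = t⁻¹ * A2 := by
        rw [hYdef, Prod.smul_snd, Prod.snd_sum, smul_eq_mul, hA2]
        exact congrArg (fun z => t⁻¹ * z) (Finset.sum_congr rfl fun k _ => rfl)
      have hX1split : X.1 = b * (x j).1 + A1 := by
        rw [hX1, ← Finset.sum_erase_add s _ hjs, add_comm]
      have hX2split : X.2 = b * (x j).2 + A2 := by
        rw [hX2, ← Finset.sum_erase_add s _ hjs, add_comm]
      set Aq := ∑ k ∈ s.erase j, β k * (x k).1 ^ 2 with hAqdef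
      -- lower bound ingredient : A1 ^ 2 ≤ t * Aq
      have hAq : A1 ^ 2 ≤ t * Aq := by
        set γ := t⁻¹ * A1 with hγ
        have hct : γ * t = A1 := by rw [hγ]; field_simp
        have hnn : 0 ≤ ∑ k ∈ s.erase j, β k * ((x k).1 - γ) ^ 2 :=
          Finset.sum_nonneg fun k hk =>
            mul_nonneg (hβ0 k (Finset.mem_of_mem_erase hk)) (sq_nonneg _)
        have hexp : ∑ k ∈ s.erase j, β k * ((x k).1 - γ) ^ 2
            = Aq - 2 * γ * A1 + γ ^ 2 * t := by
          have expand : ∀ k ∈ s.erase j, β k * ((x k).1 - γ) ^ 2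
              = β k * (x k).1 ^ 2 - 2 * γ * (β k * (x k).1) + γ ^ 2 * β k :=
            fun k _ => by ring
          rw [Finset.sum_congr rfl expand, Finset.sum_add_distrib,
            Finset.sum_sub_distrib, ← Finset.mul_sum, ← Finset.mul_sum]
        rw [hexp, ← hct] at hnn
        rw [← hct]
        nlinarith [mul_nonneg ht0.le hnn]
      have hq2 : Aq ≤ A2 := by
        rw [hAqdef, hA2]
        exact Finset.sum_le_sum fun k hk =>
          mul_le_mul_of_nonneg_left ((hxΩ k (Finset.mem_of_mem_erase hk)).1)
            (hβ0 k (Finset.mem_of_mem_erase hk))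
      have hlowkey : A1 ^ 2 ≤ t * A2 :=
        le_trans hAq (mul_le_mul_of_nonneg_left hq2 ht0.le)
      -- upper bound ingredient
      have hjΩ := hxΩ j hjs
      have hXlow : X.1 ^ 2 ≤ X.2 := hXΩ.1
      have hXup : X.2 ≤ X.1 ^ 2 + ε ^ 2 := hXΩ.2
      have hmaxsum : X.2 - X.1 ^ 2
          ≤ ((x j).2 - (x j).1 ^ 2) + ((x j).1 - X.1) ^ 2 := by
        have expand : ∀ k ∈ s, β k * (((x k).2 - (x k).1 ^ 2) + ((x k).1 - X.1) ^ 2)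
            = β k * (x k).2 - (2 * X.1) * (β k * (x k).1) + X.1 ^ 2 * β k :=
          fun k _ => by ring
        have hsum : ∑ k ∈ s, β k * (((x k).2 - (x k).1 ^ 2) + ((x k).1 - X.1) ^ 2)
            = X.2 - X.1 ^ 2 := by
          rw [Finset.sum_congr rfl expand, Finset.sum_add_distrib,
            Finset.sum_sub_distrib, ← Finset.mul_sum, ← Finset.mul_sum, hβ1,
            ← hX1, ← hX2]
          ring
        have hle := Finset.sum_le_sum (fun k hk =>
          mul_le_mul_of_nonneg_left (hjmax k hk) (hβ0 k hk))
        rw [hsum, ← Finset.sum_mul, hβ1, one_mul] at hle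
        exact hle
      have hupkey : t * A2 - A1 ^ 2 ≤ t ^ 2 * ε ^ 2 := by
        have h := discrete_step (ε := ε) (X1 := X.1) (X2 := X.2)
          (uj := (x j).1) (wj := (x j).2) ht0.le hb0.le htb
          (by linarith) hmaxsum
        rw [hX2split, hX1split] at h
        nlinarith [h]
      have hYΩ : Y ∈ OmegaSet ε := by
        have e : t⁻¹ * A2 - (t⁻¹ * A1) ^ 2 = (t * A2 - A1 ^ 2) / t ^ 2 := by
          field_simp
        refine ⟨?_, ?_⟩
        · rw [hY1, hY2]
          have h0 : 0 ≤ (t * A2 - A1 ^ 2) / t ^ 2 :=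
            div_nonneg (by linarith) (sq_nonneg t)
          rw [← e] at h0
          linarith
        · rw [hY1, hY2]
          have hd : (t * A2 - A1 ^ 2) / t ^ 2 ≤ ε ^ 2 := by
            rw [div_le_iff₀ (by positivity)]
            calc t * A2 - A1 ^ 2 ≤ t ^ 2 * ε ^ 2 := hupkey
              _ = ε ^ 2 * t ^ 2 := by ring
          rw [← e] at hd
          linarith
      -- induction hypothesis on the rest
      have hIH : ∑ k ∈ s.erase j, (β k / t) * B (x k) ≤ B Y := by
        have hsub : s.erase j ⊂ s := Finset.erase_ssubset hjs
        have hYeq : ∑ k ∈ s.erase j, (β k / t) • x k = Y := by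
          rw [hYdef, Finset.smul_sum]
          exact Finset.sum_congr rfl fun k _ => by
            rw [smul_smul, div_eq_inv_mul]
        have h1 : ∀ k ∈ s.erase j, a ≤ β k / t := fun k hk =>
          (le_div_iff₀ ht0).2 (le_trans (mul_le_of_le_one_right hα.le ht1)
            (hβα k (Finset.mem_of_mem_erase hk)))
        have h2 : ∑ k ∈ s.erase j, β k / t = 1 := by
          rw [← Finset.sum_div, ← htdef, div_self ht0.ne']
        have h3 : ∀ k ∈ s.erase j, x k ∈ OmegaSet ε :=
          fun k hk => hxΩ k (Finset.mem_of_mem_erase hk)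
        have h4 : (∑ k ∈ s.erase j, (β k / t) • x k) ∈ OmegaSet ε := by
          rw [hYeq]; exact hYΩ
        have h5 := ih (s.erase j) hsub x (fun k => β k / t) h1 h2 h3 h4
        rw [hYeq] at h5
        exact h5
      have hIH' : ∑ k ∈ s.erase j, β k * B (x k) ≤ t * B Y := by
        have heq : ∑ k ∈ s.erase j, (β k / t) * B (x k)
            = (∑ k ∈ s.erase j, β k * B (x k)) / t := by
          rw [Finset.sum_div]
          exact Finset.sum_congr rfl fun k _ => by ring
        rw [heq, div_le_iff₀ ht0] at hIH
        calc ∑ k ∈ s.erase j, β k * B (x k) ≤ B Y * t := hIH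
          _ = t * B Y := mul_comm _ _
      -- α-concavity step
      have hc1 : (1 : ℝ) - b = t := by linarith
      have hcomb : b * B (x j) + t * B Y ≤ B X := by
        rcases le_or_gt b (1 / 2) with hb2 | hb2
        · have h := hB b ⟨hbα, hb2⟩ (x j) Y hjΩ hYΩ
            (by rw [hc1, ← hXsplit]; exact hXΩ)
          rw [hc1, ← hXsplit] at h
          exact h
        · have ht2 : t ≤ 1 / 2 := by linarith
          have hc2 : (1 : ℝ) - t = b := by linarith
          have hsw : t • Y + b • x j = X := by rw [hXsplit, add_comm]
          have h := hB t ⟨htα, ht2⟩ Y (x j) hYΩ hjΩ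
            (by rw [hc2, hsw]; exact hXΩ)
          rw [hc2, hsw] at h
          linarith
      calc ∑ k ∈ s, β k * B (x k)
          = β j * B (x j) + ∑ k ∈ s.erase j, β k * B (x k) := by
            rw [← Finset.sum_erase_add s _ hjs, add_comm]
        _ ≤ b * B (x j) + t * B Y := by
            rw [← hbdef]; exact add_le_add_right hIH' _
        _ ≤ B X := hcomb


lemma integral_sUnion_finset {X : Type*} [MeasurableSpace X] (μ : Measure X) (f : X → ℝ) :
    ∀ s : Finset (Set X), (∀ I ∈ s, MeasurableSet I) →
      (∀ I ∈ s, ∀ I' ∈ s, I ≠ I' → μ (I ∩ I') = 0) →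
      (∀ I ∈ s, IntegrableOn f I μ) →
      ∫ x in ⋃₀ ↑s, f x ∂μ = ∑ I ∈ s, ∫ x in I, f x ∂μ := by
  classical
  intro s
  induction s using Finset.induction_on with
  | empty => intro _ _ _; simp
  | @insert I s hIs ih =>
    intro hmeas hdisj hint
    have hmeas' : ∀ I' ∈ s, MeasurableSet I' := fun I' h => hmeas I' (Finset.mem_insert_of_mem h)
    have hdisj' : ∀ J ∈ s, ∀ J' ∈ s, J ≠ J' → μ (J ∩ J') = 0 := fun J h J' h' hne =>
      hdisj J (Finset.mem_insert_of_mem h) J' (Finset.mem_insert_of_mem h') hne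
    have hint' : ∀ I' ∈ s, IntegrableOn f I' μ := fun I' h => hint I' (Finset.mem_insert_of_mem h)
    have hUnion : (⋃₀ ↑(insert I s) : Set X) = I ∪ ⋃₀ ↑s := by
      rw [Finset.coe_insert, Set.sUnion_insert]
    have hbi : (⋃₀ ↑s : Set X) = ⋃ J ∈ s, J := by
      rw [Set.sUnion_eq_biUnion, Finset.set_biUnion_coe]
    have hAE : AEDisjoint μ I (⋃₀ ↑s) := by
      have hsub : I ∩ ⋃₀ ↑s = ⋃ J ∈ s, I ∩ J := by
        rw [hbi, Set.inter_iUnion₂]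
      have hle : μ (I ∩ ⋃₀ ↑s) ≤ ∑ J ∈ s, μ (I ∩ J) := by
        rw [hsub]; exact measure_biUnion_finset_le s _
      have hz : ∀ J ∈ s, μ (I ∩ J) = 0 := fun J hJ =>
        hdisj I (Finset.mem_insert_self I s) J (Finset.mem_insert_of_mem hJ)
          (fun h => hIs (h ▸ hJ))
      have : ∑ J ∈ s, μ (I ∩ J) = 0 := Finset.sum_eq_zero hz
      exact le_antisymm (this ▸ hle) zero_le
    have hnm : NullMeasurableSet (⋃₀ ↑s) μ :=
      (MeasurableSet.sUnion s.countable_toSet hmeas').nullMeasurableSet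
    have hintU : IntegrableOn f (⋃₀ ↑s) μ := by
      rw [hbi]
      exact integrableOn_finset_iUnion.2 hint'
    rw [hUnion, integral_union_ae hAE hnm (hint I (Finset.mem_insert_self I s)) hintU,
      ih hmeas' hdisj' hint', Finset.sum_insert hIs]

lemma integrableOn_sUnion_finset {X : Type*} [MeasurableSpace X] (μ : Measure X) (f : X → ℝ)
    (s : Finset (Set X)) (hint : ∀ I ∈ s, IntegrableOn f I μ) :
    IntegrableOn f (⋃₀ ↑s) μ := by
  have hbi : (⋃₀ ↑s : Set X) = ⋃ J ∈ s, J := by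
    rw [Set.sUnion_eq_biUnion, Finset.set_biUnion_coe]
  rw [hbi]
  exact integrableOn_finset_iUnion.2 hint


lemma avg_sq_le {X : Type*} [MeasurableSpace X] (μ : Measure X) (φ : X → ℝ) (J : Set X)
    (hfin : μ J < ⊤) (h1 : IntegrableOn φ J μ)
    (h2 : IntegrableOn (fun x => (φ x) ^ 2) J μ) :
    (⨍ x in J, φ x ∂μ) ^ 2 ≤ ⨍ x in J, (φ x) ^ 2 ∂μ := by
  by_cases h0 : μ J = 0
  · have hz : μ.restrict J = 0 := Measure.restrict_eq_zero.2 h0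
    rw [setAverage_eq, setAverage_eq, hz, integral_zero_measure, integral_zero_measure]
    simp
  · set M := (μ J).toReal with hM
    have hM0 : 0 < M := ENNReal.toReal_pos h0 hfin.ne
    clear_value M
    set c := ⨍ x in J, φ x ∂μ with hc
    clear_value c
    have hcI : ∫ x in J, φ x ∂μ = M * c := by
      rw [hc, setAverage_eq, smul_eq_mul, measureReal_def, ← hM, ← mul_assoc, mul_inv_cancel₀ hM0.ne',
        one_mul]
    have hnn : 0 ≤ ∫ x in J, (φ x - c) ^ 2 ∂μ := integral_nonneg fun x => sq_nonneg _
    have hexp : ∫ x in J, (φ x - c) ^ 2 ∂μ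
        = (∫ x in J, (φ x) ^ 2 ∂μ) - 2 * c * (∫ x in J, φ x ∂μ) + M * c ^ 2 := by
      have ha : IntegrableOn (fun x => φ x ^ 2 - 2 * c * φ x) J μ :=
        h2.sub (h1.const_mul (2 * c))
      have hb : IntegrableOn (fun _ => (c : ℝ) ^ 2) J μ :=
        integrableOn_const hfin.ne
      have hb' : IntegrableOn (fun x => 2 * c * φ x) J μ := h1.const_mul (2 * c)
      calc ∫ x in J, (φ x - c) ^ 2 ∂μ
          = ∫ x in J, ((φ x ^ 2 - 2 * c * φ x) + c ^ 2) ∂μ := by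
            apply integral_congr_ae
            filter_upwards with x
            ring
        _ = (∫ x in J, (φ x ^ 2 - 2 * c * φ x) ∂μ) + ∫ x in J, (c : ℝ) ^ 2 ∂μ :=
            integral_add ha hb
        _ = (∫ x in J, φ x ^ 2 ∂μ) - (∫ x in J, 2 * c * φ x ∂μ)
              + ∫ x in J, (c : ℝ) ^ 2 ∂μ := by
            rw [integral_sub h2 hb']
        _ = (∫ x in J, (φ x) ^ 2 ∂μ) - 2 * c * (∫ x in J, φ x ∂μ) + M * c ^ 2 := by
            rw [MeasureTheory.integral_const_mul, setIntegral_const, smul_eq_mul, measureReal_def, ← hM]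
    rw [hexp, hcI] at hnn
    rw [setAverage_eq, smul_eq_mul, measureReal_def, ← hM]
    have h3 : M * c ^ 2 ≤ ∫ x in J, (φ x) ^ 2 ∂μ := by nlinarith [hnn]
    have h4 := mul_le_mul_of_nonneg_left h3 (inv_nonneg.2 hM0.le)
    rw [← mul_assoc, inv_mul_cancel₀ hM0.ne', one_mul] at h4
    exact h4

theorem stmt10 {X : Type*} [MeasurableSpace X] (μ : Measure X) (α ε : ℝ)
    (hα : α ∈ Set.Ioc (0 : ℝ) (1 / 2)) (hε : 0 < ε)
    (hXpos : 0 < μ Set.univ) (hXfin : μ Set.univ < ⊤)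
    (T : AlphaTree μ α)
    (B : ℝ × ℝ → ℝ)
    (hB : ∀ β ∈ Set.Icc α (1 / 2 : ℝ), ∀ x y : ℝ × ℝ,
      x ∈ OmegaSet ε → y ∈ OmegaSet ε → β • x + (1 - β) • y ∈ OmegaSet ε →
      β * B x + (1 - β) * B y ≤ B (β • x + (1 - β) • y))
    (φ : X → ℝ)
    (hsimple : ∃ N : ℕ, ∀ J ∈ T.gens N, ∃ c : ℝ, ∀ᵐ x ∂μ.restrict J, φ x = c)
    (hbmo : ∀ J ∈ T.tree,
      (⨍ x in J, (φ x) ^ 2 ∂μ) - (⨍ x in J, φ x ∂μ) ^ 2 ≤ ε ^ 2) :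
    (1 / (μ Set.univ).toReal) * ∫ x, B (φ x, (φ x) ^ 2) ∂μ ≤
      B (⨍ x, φ x ∂μ, ⨍ x, (φ x) ^ 2 ∂μ) := by
  classical
  obtain ⟨hα0, hα2⟩ := hα
  obtain ⟨N, hN⟩ := hsimple
  have htree : ∀ m, ∀ J ∈ T.gens m, J ∈ T.tree := fun m J hJ => Set.mem_iUnion.2 ⟨m, hJ⟩
  have hchild_gen : ∀ m, ∀ J ∈ T.gens m, ∀ I ∈ T.children J, I ∈ T.gens (m + 1) := by
    intro m J hJ I hI
    rw [T.gens_succ m]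
    exact Set.mem_iUnion₂.2 ⟨J, hJ, hI⟩
  have hfinJ : ∀ J : Set X, μ J < ⊤ := fun J =>
    lt_of_le_of_lt (measure_mono (Set.subset_univ J)) hXfin
  have hpt : ∀ J ∈ T.tree, IntegrableOn φ J μ → IntegrableOn (fun x => (φ x) ^ 2) J μ →
      ((⨍ x in J, φ x ∂μ, ⨍ x in J, (φ x) ^ 2 ∂μ) : ℝ × ℝ) ∈ OmegaSet ε := by
    intro J hJ h1 h2
    have hlow := avg_sq_le μ φ J (hfinJ J) h1 h2
    have hup := hbmo J hJ
    exact ⟨hlow, by linarith⟩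
  have key : ∀ d m, m + d = N → ∀ J ∈ T.gens m,
      IntegrableOn φ J μ ∧ IntegrableOn (fun x => (φ x) ^ 2) J μ ∧
      IntegrableOn (fun x => B (φ x, (φ x) ^ 2)) J μ ∧
      ∫ x in J, B (φ x, (φ x) ^ 2) ∂μ ≤
        (μ J).toReal * B (⨍ x in J, φ x ∂μ, ⨍ x in J, (φ x) ^ 2 ∂μ) := by
    intro d
    induction d with
    | zero =>
      intro m hm J hJ
      rw [Nat.add_zero] at hm
      subst hm
      obtain ⟨c, hc⟩ := hN J hJ
      have hfin := hfinJ J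
      have hc' : φ =ᵐ[μ.restrict J] fun _ => c := hc
      have hc2 : (fun x => (φ x) ^ 2) =ᵐ[μ.restrict J] fun _ => c ^ 2 :=
        hc'.mono fun x hx => by simp only [hx]
      have hcB : (fun x => B (φ x, (φ x) ^ 2)) =ᵐ[μ.restrict J] fun _ => B (c, c ^ 2) :=
        hc'.mono fun x hx => by simp only [hx]
      have i1 : IntegrableOn φ J μ :=
        (integrableOn_const hfin.ne).congr hc'.symm
      have i2 : IntegrableOn (fun x => (φ x) ^ 2) J μ :=
        (integrableOn_const hfin.ne).congr hc2.symm
      have i3 : IntegrableOn (fun x => B (φ x, (φ x) ^ 2)) J μ :=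
        (integrableOn_const hfin.ne).congr hcB.symm
      refine ⟨i1, i2, i3, ?_⟩
      by_cases h0 : μ J = 0
      · rw [show μ.restrict J = 0 from Measure.restrict_eq_zero.2 h0,
          integral_zero_measure, h0]
        simp
      · have hM0 : 0 < (μ J).toReal := ENNReal.toReal_pos h0 hfin.ne
        have havg1 : ⨍ x in J, φ x ∂μ = c := by
          rw [setAverage_eq, integral_congr_ae hc', setIntegral_const, smul_eq_mul,
            smul_eq_mul, measureReal_def, ← mul_assoc, inv_mul_cancel₀ hM0.ne', one_mul]
        have havg2 : ⨍ x in J, (φ x) ^ 2 ∂μ = c ^ 2 := by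
          rw [setAverage_eq, integral_congr_ae hc2, setIntegral_const, smul_eq_mul,
            smul_eq_mul, measureReal_def, ← mul_assoc, inv_mul_cancel₀ hM0.ne', one_mul]
        rw [havg1, havg2, integral_congr_ae hcB, setIntegral_const, smul_eq_mul, measureReal_def]
    | succ d ihd =>
      intro m hm J hJ
      have hm' : (m + 1) + d = N := by omega
      have hsfin := T.children_finite m J hJ
      have hmem : ∀ I : Set X, I ∈ hsfin.toFinset ↔ I ∈ T.children J := fun I =>
        Set.Finite.mem_toFinset _
      have hcover : ⋃₀ ↑hsfin.toFinset = J := by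
        rw [Set.Finite.coe_toFinset]
        exact T.children_cover m J hJ
      have hIgen : ∀ I ∈ hsfin.toFinset, I ∈ T.gens (m + 1) := fun I hI =>
        hchild_gen m J hJ I ((hmem I).1 hI)
      have hPI := fun I (hI : I ∈ hsfin.toFinset) => ihd (m + 1) hm' I (hIgen I hI)
      have hmeasI : ∀ I ∈ hsfin.toFinset, MeasurableSet I := fun I hI =>
        T.measurableSet_mem _ I (hIgen I hI)
      have hdisjI : ∀ I ∈ hsfin.toFinset, ∀ I' ∈ hsfin.toFinset, I ≠ I' → μ (I ∩ I') = 0 :=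
        fun I hI I' hI' hne =>
          T.children_ae_disjoint m J hJ I ((hmem I).1 hI) I' ((hmem I').1 hI') hne
      have i1 : IntegrableOn φ J μ := by
        rw [← hcover]
        exact integrableOn_sUnion_finset μ φ _ fun I hI => (hPI I hI).1
      have i2 : IntegrableOn (fun x => (φ x) ^ 2) J μ := by
        rw [← hcover]
        exact integrableOn_sUnion_finset μ _ _ fun I hI => (hPI I hI).2.1
      have i3 : IntegrableOn (fun x => B (φ x, (φ x) ^ 2)) J μ := by
        rw [← hcover]
        exact integrableOn_sUnion_finset μ _ _ fun I hI => (hPI I hI).2.2.1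
      refine ⟨i1, i2, i3, ?_⟩
      by_cases h0 : μ J = 0
      · rw [show μ.restrict J = 0 from Measure.restrict_eq_zero.2 h0,
          integral_zero_measure, h0]
        simp
      · have hM0 : 0 < (μ J).toReal := ENNReal.toReal_pos h0 (hfinJ J).ne
        have hsplit : ∀ f : X → ℝ, (∀ I ∈ hsfin.toFinset, IntegrableOn f I μ) →
            ∫ x in J, f x ∂μ = ∑ I ∈ hsfin.toFinset, ∫ x in I, f x ∂μ := by
          intro f hf
          conv_lhs => rw [← hcover]
          exact integral_sUnion_finset μ f _ hmeasI hdisjI hf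
        have hμI : ∀ I ∈ hsfin.toFinset, 0 < (μ I).toReal := fun I hI =>
          lt_of_lt_of_le (mul_pos hα0 hM0)
            (T.children_not_small m J hJ I ((hmem I).1 hI))
        have hmeasSum : (μ J).toReal = ∑ I ∈ hsfin.toFinset, (μ I).toReal := by
          have h1' : ∀ I ∈ hsfin.toFinset, IntegrableOn (fun _ => (1 : ℝ)) I μ :=
            fun I hI => integrableOn_const (hfinJ I).ne
          have h := hsplit (fun _ => (1 : ℝ)) h1'
          rw [setIntegral_const, smul_eq_mul, mul_one, measureReal_def] at h
          rw [h]
          exact Finset.sum_congr rfl fun I hI => by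
            rw [setIntegral_const, smul_eq_mul, mul_one, measureReal_def]
        have hβ1 : ∑ I ∈ hsfin.toFinset, (μ I).toReal / (μ J).toReal = 1 := by
          rw [← Finset.sum_div, ← hmeasSum, div_self hM0.ne']
        have hβα : ∀ I ∈ hsfin.toFinset, α ≤ (μ I).toReal / (μ J).toReal := fun I hI =>
          (le_div_iff₀ hM0).2 (T.children_not_small m J hJ I ((hmem I).1 hI))
        have hpΩ : ∀ I ∈ hsfin.toFinset,
            ((⨍ x in I, φ x ∂μ, ⨍ x in I, (φ x) ^ 2 ∂μ) : ℝ × ℝ) ∈ OmegaSet ε :=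
          fun I hI => hpt I (htree (m + 1) I (hIgen I hI)) (hPI I hI).1 (hPI I hI).2.1
        have hco : ∀ f : X → ℝ, (∀ I ∈ hsfin.toFinset, IntegrableOn f I μ) →
            ∑ I ∈ hsfin.toFinset, ((μ I).toReal / (μ J).toReal) * (⨍ x in I, f x ∂μ)
              = ⨍ x in J, f x ∂μ := by
          intro f hf
          rw [setAverage_eq, smul_eq_mul, hsplit f hf, Finset.mul_sum]
          refine Finset.sum_congr rfl fun I hI => ?_
          rw [setAverage_eq, smul_eq_mul, measureReal_def, measureReal_def]
          have h1 := (hμI I hI).ne'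
          field_simp
        have hcomb : ∑ I ∈ hsfin.toFinset, ((μ I).toReal / (μ J).toReal) •
            ((⨍ x in I, φ x ∂μ, ⨍ x in I, (φ x) ^ 2 ∂μ) : ℝ × ℝ)
            = ((⨍ x in J, φ x ∂μ, ⨍ x in J, (φ x) ^ 2 ∂μ) : ℝ × ℝ) := by
          apply Prod.ext
          · rw [Prod.fst_sum]
            rw [← hco φ fun I hI => (hPI I hI).1]
            exact Finset.sum_congr rfl fun I hI => rfl
          · rw [Prod.snd_sum]
            rw [← hco (fun x => (φ x) ^ 2) fun I hI => (hPI I hI).2.1]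
            exact Finset.sum_congr rfl fun I hI => rfl
        have hdisc := discrete_concave hα0 hα2 hε B hB hsfin.toFinset
          (fun I => ((⨍ x in I, φ x ∂μ, ⨍ x in I, (φ x) ^ 2 ∂μ) : ℝ × ℝ))
          (fun I => (μ I).toReal / (μ J).toReal) hβα hβ1 hpΩ
          (by rw [hcomb]; exact hpt J (htree m J hJ) i1 i2)
        rw [hcomb] at hdisc
        have hchain : ∫ x in J, B (φ x, (φ x) ^ 2) ∂μ
            ≤ ∑ I ∈ hsfin.toFinset,
              (μ I).toReal * B (⨍ x in I, φ x ∂μ, ⨍ x in I, (φ x) ^ 2 ∂μ) := by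
          rw [hsplit _ fun I hI => (hPI I hI).2.2.1]
          exact Finset.sum_le_sum fun I hI => (hPI I hI).2.2.2
        have heq : ∑ I ∈ hsfin.toFinset,
              (μ I).toReal * B (⨍ x in I, φ x ∂μ, ⨍ x in I, (φ x) ^ 2 ∂μ)
            = (μ J).toReal * ∑ I ∈ hsfin.toFinset, ((μ I).toReal / (μ J).toReal)
                * B (⨍ x in I, φ x ∂μ, ⨍ x in I, (φ x) ^ 2 ∂μ) := by
          rw [Finset.mul_sum]
          refine Finset.sum_congr rfl fun I hI => ?_
          field_simp
        calc ∫ x in J, B (φ x, (φ x) ^ 2) ∂μ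
            ≤ ∑ I ∈ hsfin.toFinset,
              (μ I).toReal * B (⨍ x in I, φ x ∂μ, ⨍ x in I, (φ x) ^ 2 ∂μ) := hchain
          _ = (μ J).toReal * ∑ I ∈ hsfin.toFinset, ((μ I).toReal / (μ J).toReal)
                * B (⨍ x in I, φ x ∂μ, ⨍ x in I, (φ x) ^ 2 ∂μ) := heq
          _ ≤ (μ J).toReal * B (⨍ x in J, φ x ∂μ, ⨍ x in J, (φ x) ^ 2 ∂μ) :=
              mul_le_mul_of_nonneg_left hdisc hM0.le
  have huniv : Set.univ ∈ T.gens 0 := by rw [T.gens_zero]; rfl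
  obtain ⟨-, -, -, hfinal⟩ := key N 0 (Nat.zero_add N) Set.univ huniv
  rw [Measure.restrict_univ] at hfinal
  have hM0 : 0 < (μ Set.univ).toReal := ENNReal.toReal_pos hXpos.ne' hXfin.ne
  have h2 : (1 / (μ Set.univ).toReal) * ((μ Set.univ).toReal
      * B (⨍ x, φ x ∂μ, ⨍ x, (φ x) ^ 2 ∂μ)) = B (⨍ x, φ x ∂μ, ⨍ x, (φ x) ^ 2 ∂μ) := by
    field_simp
  have h3 := mul_le_mul_of_nonneg_left hfinal
    (by positivity : (0 : ℝ) ≤ 1 / (μ Set.univ).toReal)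
  linarith
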